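/- For every finite group G, the generator distance between G and the trivial group in the class of all groups is at most 3. -/

import Mathlib

open CategoryTheory

namespace GrpNetwork

/-- `A` is largely embeddable into `B` in the class of all groups: `B` has a subgroup
`H` isomorphic to `A` such that `H` together with one extra element generates `B`. -/
def LargeEmb (A B : GrpCat.{0}) : Prop :=
  ∃ H : Subgroup B, Nonempty (A ≃* H) ∧ ∃ b : B, Subgroup.closure (↑H ∪ {b}) = ⊤

/-- A path of length `n` between `A` and `B` in the network of large embeddings of
the class of all groups. -/
def HasPath (A B : GrpCat.{0}) (n : ℕ) : Prop :=
  ∃ C : ℕ → GrpCat.{0}, Nonempty ((C 0) ≃* A) ∧ Nonempty ((C n) ≃* B) ∧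
    ∀ i < n, LargeEmb (C i) (C (i + 1)) ∨ LargeEmb (C (i + 1)) (C i)

/-- The generator distance in the class of all groups, in `ℕ ∪ {∞}`. -/
noncomputable def dis (A B : GrpCat.{0}) : ℕ∞ :=
  sInf {q : ℕ∞ | ∃ n : ℕ, q = (n : ℕ∞) ∧ HasPath A B n}

end GrpNetwork

section Aux

open Equiv Equiv.Perm Subgroup

/-- The Cayley embedding of `α` into the permutations of `Option α`. -/
noncomputable def cayleyOpt (α : Type) [Group α] : α →* Equiv.Perm (Option α) :=
  (Equiv.Perm.viaEmbeddingHom Function.Embedding.some).comp (MulAction.toPermHom α α)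

variable {α : Type} [Group α]

lemma cayleyOpt_injective : Function.Injective (cayleyOpt α) :=
  (Equiv.Perm.viaEmbeddingHom_injective _).comp MulAction.toPerm_injective

lemma cayleyOpt_some (x y : α) : cayleyOpt α x (some y) = some (x * y) := by
  have := (MulAction.toPerm (α := α) (β := α) x).viaEmbedding_apply Function.Embedding.some y
  simpa [MulAction.toPerm, cayleyOpt, Equiv.Perm.viaEmbeddingHom_apply] using this

lemma cayleyOpt_none (x : α) : cayleyOpt α x none = none := by
  have := (MulAction.toPerm (α := α) (β := α) x).viaEmbedding_apply_of_notMem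
    Function.Embedding.some none (by simp)
  simpa [cayleyOpt, Equiv.Perm.viaEmbeddingHom_apply] using this

lemma closure_cayley_swap [Finite α] [DecidableEq (Option α)] :
    Subgroup.closure ((↑(cayleyOpt α).range : Set (Equiv.Perm (Option α))) ∪
      {Equiv.swap none (some 1)}) = ⊤ := by
  classical
  haveI : Fintype α := Fintype.ofFinite α
  haveI : Finite (Option α) := Finite.of_fintype _
  set S : Set (Equiv.Perm (Option α)) :=
    (↑(cayleyOpt α).range : Set (Equiv.Perm (Option α))) ∪ {Equiv.swap none (some 1)} with hS
  have hmem : ∀ x : α, Equiv.swap (none : Option α) (some x) ∈ Subgroup.closure S := by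
    intro x
    have h1 : cayleyOpt α x ∈ Subgroup.closure S :=
      subset_closure (Set.mem_union_left _ ⟨x, rfl⟩)
    have h0 : Equiv.swap (none : Option α) (some 1) ∈ Subgroup.closure S :=
      subset_closure (Set.mem_union_right _ rfl)
    have hconj := Equiv.swap_apply_apply (cayleyOpt α x) (none : Option α) (some 1)
    rw [cayleyOpt_none, cayleyOpt_some, mul_one] at hconj
    rw [hconj]
    exact mul_mem (mul_mem h1 h0) (inv_mem h1)
  rw [eq_top_iff, ← Equiv.Perm.closure_isSwap, Subgroup.closure_le]
  rintro σ ⟨a, b, hab, rfl⟩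
  rcases a with _ | x
  · rcases b with _ | y
    · exact absurd rfl hab
    · exact hmem y
  · rcases b with _ | y
    · rw [Equiv.swap_comm]; exact hmem x
    · have hxy : x ≠ y := fun h => hab (by rw [h])
      have h := Equiv.swap_apply_apply (Equiv.swap (none : Option α) (some x)) none (some y)
      rw [Equiv.swap_apply_left,
        Equiv.swap_apply_of_ne_of_ne (by simp) (by simpa using fun h' => hxy h'.symm)] at h
      rw [h]
      exact mul_mem (mul_mem (hmem x) (hmem y)) (inv_mem (hmem x))

lemma exists_full_cycle (α : Type) [Group α] [Finite α] :
    ∃ σ : Equiv.Perm (Option α), σ.IsCycle ∧ ∀ a, σ a ≠ a := by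
  classical
  haveI : Fintype α := Fintype.ofFinite α
  haveI : Fintype (Option α) := instFintypeOption
  set m := Fintype.card (Option α) with hmdef
  have hm : 2 ≤ m := Fintype.one_lt_card
  let e : Fin m ≃ Option α := (Fintype.equivFin (Option α)).symm
  let p : Option α → Prop := fun _ => True
  let f : Fin m ≃ Subtype p :=
    e.trans ⟨fun a => ⟨a, trivial⟩, fun s => s.1, fun a => rfl, fun s => rfl⟩
  have h3 : ∀ x : Fin m, finRotate m x ≠ x := by
    intro x
    have h := support_finRotate_of_le hm
    rw [Finset.eq_univ_iff_forall] at h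
    exact Equiv.Perm.mem_support.mp (h x)
  refine ⟨(finRotate m).extendDomain f, (isCycle_finRotate_of_le hm).extendDomain f, ?_⟩
  intro a hcontra
  rw [Equiv.Perm.extendDomain_apply_subtype _ f trivial] at hcontra
  have h2 : f (finRotate m (f.symm ⟨a, trivial⟩)) = f (f.symm ⟨a, trivial⟩) := by
    apply Subtype.ext
    rw [hcontra, Equiv.apply_symm_apply]
  exact h3 _ (f.injective h2)

lemma closure_bot_self (B : Type) [Group B] (g : B) :
    Subgroup.closure ((↑(⊥ : Subgroup (Subgroup.zpowers g)) : Set (Subgroup.zpowers g)) ∪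
      {(⟨g, Subgroup.mem_zpowers g⟩ : Subgroup.zpowers g)}) = ⊤ := by
  rw [eq_top_iff]
  rintro ⟨x, hx⟩ -
  obtain ⟨n, hn⟩ := Subgroup.mem_zpowers_iff.mp hx
  have hg : (⟨g, Subgroup.mem_zpowers g⟩ : Subgroup.zpowers g) ∈ Subgroup.closure
      ((↑(⊥ : Subgroup (Subgroup.zpowers g)) : Set (Subgroup.zpowers g)) ∪
        {(⟨g, Subgroup.mem_zpowers g⟩ : Subgroup.zpowers g)}) :=
    Subgroup.subset_closure (Set.mem_union_right _ rfl)
  have : (⟨x, hx⟩ : Subgroup.zpowers g) = (⟨g, Subgroup.mem_zpowers g⟩ : Subgroup.zpowers g) ^ n := by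
    apply Subtype.ext
    rw [SubgroupClass.coe_zpow]
    exact hn.symm
  rw [this]
  exact zpow_mem hg n

end Aux

/-- the generator distance between any finite group and the trivial group
in the class of all groups is at most 3. -/
theorem dis_finite_group_trivial_le_three (G : GrpCat.{0}) (hG : Finite G) :
    GrpNetwork.dis G (GrpCat.of PUnit) ≤ 3 := by
  classical
  haveI : Finite ↥G := hG
  haveI : Fintype ↥G := Fintype.ofFinite _
  haveI : Fintype (Option ↥G) := instFintypeOption
  obtain ⟨σ, hcyc, hfix⟩ := exists_full_cycle ↥G
  have hsupp : σ.support = Finset.univ := by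
    rw [Finset.eq_univ_iff_forall]
    exact fun a => Equiv.Perm.mem_support.mpr (hfix a)
  set B : GrpCat.{0} := GrpCat.of (Equiv.Perm (Option ↥G)) with hB
  set K : GrpCat.{0} := GrpCat.of ↥(Subgroup.zpowers σ) with hK
  let C : ℕ → GrpCat.{0} := fun i =>
    match i with
    | 0 => G
    | 1 => B
    | 2 => K
    | _ => GrpCat.of PUnit
  have hpath : GrpNetwork.HasPath G (GrpCat.of PUnit) 3 := by
    refine ⟨C, ⟨MulEquiv.refl _⟩, ⟨MulEquiv.refl _⟩, ?_⟩
    intro i hi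
    interval_cases i
    · -- G ⋖ B
      left
      refine ⟨(cayleyOpt ↥G).range, ⟨MonoidHom.ofInjective cayleyOpt_injective⟩,
        Equiv.swap none (some 1), ?_⟩
      exact closure_cayley_swap
    · -- K ⋖ B
      right
      refine ⟨Subgroup.zpowers σ, ⟨MulEquiv.refl _⟩, Equiv.swap none (σ none), ?_⟩
      rw [eq_top_iff, ← Equiv.Perm.closure_cycle_adjacent_swap hcyc hsupp none,
        Subgroup.closure_le]
      rw [Set.insert_subset_iff]
      constructor
      · exact Subgroup.subset_closure (Set.mem_union_left _ (Subgroup.mem_zpowers σ))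
      · rw [Set.singleton_subset_iff]
        exact Subgroup.subset_closure (Set.mem_union_right _ rfl)
    · -- 1 ⋖ K
      right
      refine ⟨⊥, ⟨@MulEquiv.ofUnique _ _ (inferInstanceAs (Unique PUnit)) _ _ _⟩, ⟨σ, Subgroup.mem_zpowers σ⟩, ?_⟩
      exact closure_bot_self _ σ
  apply sInf_le
  exact ⟨3, rfl, hpath⟩
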